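/- arXiv:2202.09055 — 2 statements merged into one kernel-verified Lean document; each statement's English description precedes it below -/
import Mathlib

section
/- For every γ ∈ (0, 3/8) there exists a constant C_γ > 0 (depending only on γ and T, not on n) such that for every integer n ≥ 2, every x ∈ [0,π], and all 0 ≤ s < t ≤ T, ∫_0^s ∫_0^π |G^n_{t−r}(x,z) − G^n_{s−r}(x,z)|² dz dr + ∫_s^t ∫_0^π |G^n_{t−r}(x,z)|² dz dr ≤ C_γ |t−s|^{2γ}. -/
open Real Finset

lemma sum_cos_aux (n : ℕ) (hn : 0 < n) (a : ℤ) :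
    ∑ m ∈ Finset.range n, Real.cos ((m : ℝ) * a * Real.pi / n) =
      if (2 * (n:ℤ)) ∣ a then (n:ℝ) else if Even a then 0 else 1 := by
  have hn' : (n:ℝ) ≠ 0 := Nat.cast_ne_zero.2 hn.ne'
  by_cases hdvd : (2 * (n:ℤ)) ∣ a
  · obtain ⟨k, hk⟩ := hdvd
    rw [if_pos ⟨k, hk⟩]
    have : ∀ m ∈ Finset.range n, Real.cos ((m : ℝ) * a * Real.pi / n) = 1 := by
      intro m _
      have harg : (m : ℝ) * a * Real.pi / n = (m * k : ℤ) * (2 * Real.pi) := by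
        subst hk; push_cast; field_simp
      rw [harg, Real.cos_int_mul_two_pi]
    rw [Finset.sum_congr rfl this]; simp
  · rw [if_neg hdvd]
    set x : ℂ := Complex.exp ((a * Real.pi / n) * Complex.I) with hxdef
    have hx1 : x ≠ 1 := by
      intro h
      rw [hxdef, Complex.exp_eq_one_iff] at h
      obtain ⟨l, hl⟩ := h
      have hl2 : ((a:ℂ) * Real.pi / n) * Complex.I = ((l:ℂ) * (2 * Real.pi)) * Complex.I := by
        rw [hl]; ring
      have hl' : ((a:ℂ) * Real.pi / n) = l * (2 * Real.pi) :=
        mul_right_cancel₀ Complex.I_ne_zero hl2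
      have hlr : (a : ℝ) * Real.pi / n = l * (2 * Real.pi) := by
        exact_mod_cast hl'
      have : (a : ℝ) = 2 * n * l := by
        field_simp at hlr
        linear_combination hlr
      exact hdvd ⟨l, by exact_mod_cast this⟩
    have hxm : ∀ m : ℕ, (x ^ m).re = Real.cos ((m : ℝ) * a * Real.pi / n) := by
      intro m
      rw [hxdef, ← Complex.exp_nat_mul]
      have : (m:ℂ) * ((a * Real.pi / n) * Complex.I)
          = ((m * a * Real.pi / n : ℝ) : ℂ) * Complex.I := by push_cast; ring
      rw [this, Complex.exp_ofReal_mul_I_re]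
    have hsum : ∑ m ∈ Finset.range n, Real.cos ((m : ℝ) * a * Real.pi / n)
        = ((x ^ n - 1) / (x - 1)).re := by
      rw [← geom_sum_eq hx1 n, Complex.re_sum]
      exact Finset.sum_congr rfl fun m _ => (hxm m).symm
    have hnc : (n:ℂ) ≠ 0 := Nat.cast_ne_zero.2 hn.ne'
    have hxn : x ^ n = (-1 : ℂ) ^ a := by
      have h1 : x ^ n = Complex.exp ((a:ℂ) * (Real.pi * Complex.I)) := by
        rw [hxdef, ← Complex.exp_nat_mul]
        congr 1
        field_simp
      rw [h1, Complex.exp_int_mul, Complex.exp_pi_mul_I]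
    by_cases hev : Even a
    · rw [if_pos hev, hsum, hxn, hev.neg_one_zpow]
      simp
    · rw [if_neg hev, hsum, hxn, (Int.not_even_iff_odd.1 hev).neg_one_zpow]
      have hre : x.re = Real.cos ((a:ℝ) * Real.pi / n) := by
        have := hxm 1
        simpa using this
      have him : x.im = Real.sin ((a:ℝ) * Real.pi / n) := by
        rw [hxdef]
        have : ((a:ℂ) * Real.pi / n) * Complex.I
            = ((a * Real.pi / n : ℝ) : ℂ) * Complex.I := by push_cast; ring
        rw [this, Complex.exp_ofReal_mul_I_im]
      set c := Real.cos ((a:ℝ) * Real.pi / n)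
      set s := Real.sin ((a:ℝ) * Real.pi / n)
      have hpyth : s ^ 2 + c ^ 2 = 1 := Real.sin_sq_add_cos_sq _
      have hc1 : c ≠ 1 := by
        intro hc
        apply hx1
        have hs0 : s = 0 := by nlinarith
        apply Complex.ext <;> simp [hre, him, hc, hs0]
      have hden : (c - 1)^2 + s^2 = 2 - 2*c := by nlinarith
      have hdenne : 2 - 2*c ≠ 0 := by
        intro h; apply hc1; linarith
      rw [Complex.div_re]
      have h1 : (-1 - 1 : ℂ).re = -2 := by norm_num
      have h2 : (-1 - 1 : ℂ).im = 0 := by norm_num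
      have h3 : (x - 1).re = c - 1 := by simp [hre]
      have h4 : (x - 1).im = s := by simp [him]
      have h5 : Complex.normSq (x - 1) = (c-1)^2 + s^2 := by
        rw [Complex.normSq_apply, h3, h4]; ring
      rw [h1, h2, h3, h4, h5, hden]
      field_simp
      ring

lemma sum_sin_sin (n j k : ℕ) (hn : 2 ≤ n) (hj : j ∈ Finset.Icc 1 (n-1)) (hk : k ∈ Finset.Icc 1 (n-1)) :
    ∑ m ∈ Finset.range n, Real.sin ((j:ℝ) * ((m:ℝ) * (Real.pi / n))) *
        Real.sin ((k:ℝ) * ((m:ℝ) * (Real.pi / n)))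
      = if j = k then (n:ℝ)/2 else 0 := by
  obtain ⟨hj1, hjn⟩ := Finset.mem_Icc.1 hj
  obtain ⟨hk1, hkn⟩ := Finset.mem_Icc.1 hk
  have hn0 : 0 < n := by omega
  have hterm : ∀ m ∈ Finset.range n,
      Real.sin ((j:ℝ) * ((m:ℝ) * (Real.pi / n))) * Real.sin ((k:ℝ) * ((m:ℝ) * (Real.pi / n)))
        = (Real.cos ((m:ℝ) * (((j:ℤ) - k : ℤ):ℝ) * Real.pi / n)
           - Real.cos ((m:ℝ) * (((j:ℤ) + k : ℤ):ℝ) * Real.pi / n)) / 2 := by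
    intro m _
    have e1 : (m:ℝ) * (((j:ℤ) - k : ℤ):ℝ) * Real.pi / n
        = (j:ℝ) * ((m:ℝ) * (Real.pi / n)) - (k:ℝ) * ((m:ℝ) * (Real.pi / n)) := by
      push_cast; ring
    have e2 : (m:ℝ) * (((j:ℤ) + k : ℤ):ℝ) * Real.pi / n
        = (j:ℝ) * ((m:ℝ) * (Real.pi / n)) + (k:ℝ) * ((m:ℝ) * (Real.pi / n)) := by
      push_cast; ring
    rw [e1, e2, Real.cos_sub, Real.cos_add]; ring
  rw [Finset.sum_congr rfl hterm, ← Finset.sum_div, Finset.sum_sub_distrib,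
      sum_cos_aux n hn0 ((j:ℤ) - k), sum_cos_aux n hn0 ((j:ℤ) + k)]
  have hnd2 : ¬ (2*(n:ℤ)) ∣ ((j:ℤ) + k) := by
    intro h
    have h1 := Int.le_of_dvd (by omega) h
    omega
  by_cases hjk : j = k
  · subst hjk
    have hd0 : (2*(n:ℤ)) ∣ ((j:ℤ) - j) := ⟨0, by ring⟩
    have he0 : Even ((j:ℤ) + j) := ⟨(j:ℤ), by ring⟩
    rw [if_pos hd0, if_neg hnd2, if_pos he0, if_pos rfl]
    ring
  · have hnd1 : ¬ (2*(n:ℤ)) ∣ ((j:ℤ) - k) := by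
      intro h
      have habs := Int.le_of_dvd (b := |(j:ℤ) - k|) (by rw [abs_pos]; omega) ((dvd_abs _ _).2 h)
      have h2 : |(j:ℤ) - k| ≤ n := by rw [abs_le]; omega
      have h3 : (2:ℤ) ≤ n := by exact_mod_cast hn
      linarith
    rw [if_neg hnd1, if_neg hnd2, if_neg hjk]
    by_cases hev : Even ((j:ℤ) - k)
    · have hev2 : Even ((j:ℤ) + k) := by
        rcases hev with ⟨c, hc⟩; exact ⟨c + k, by omega⟩
    

      rw [if_pos hev, if_pos hev2]; ring
    · have hev2 : ¬ Even ((j:ℤ) + k) := by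
        rintro ⟨c, hc⟩; exact hev ⟨c - k, by omega⟩
      rw [if_neg hev, if_neg hev2]; ring



/-- `φ_j(x) = √(2/π)·sin(jx)`. -/
noncomputable def phi (j : ℕ) (x : ℝ) : ℝ := Real.sqrt (2 / Real.pi) * Real.sin (j * x)

/-- `λ_{j,n} = −j²·c_{j,n}` with `c_{j,n} = sin²(jπ/(2n))/(jπ/(2n))²`. -/
noncomputable def lam (n j : ℕ) : ℝ :=
  -((j : ℝ) ^ 2) * (Real.sin ((j : ℝ) * Real.pi / (2 * n)) ^ 2
    / ((j : ℝ) * Real.pi / (2 * n)) ^ 2)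

/-- `κ_n(y) = h⌊y/h⌋` with `h = π/n`. -/
noncomputable def kappa (n : ℕ) (y : ℝ) : ℝ :=
  (Real.pi / n) * (⌊y / (Real.pi / n)⌋ : ℝ)

/-- Piecewise linear interpolant of `φ_j` on the grid `{kπ/n}`. -/
noncomputable def phiI (n j : ℕ) (x : ℝ) : ℝ :=
  phi j (kappa n x) + ((n : ℝ) * x / Real.pi - (⌊x / (Real.pi / n)⌋ : ℝ))
    * (phi j (kappa n x + Real.pi / n) - phi j (kappa n x))

/-- Discrete Green function `G^n_t(x,y) = Σ_{j=1}^{n−1} e^{−λ_{j,n}²t} φ_{j,n}(x) φ_j(κ_n(y))`. -/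
noncomputable def Gn (n : ℕ) (t x y : ℝ) : ℝ :=
  ∑ j ∈ Finset.Icc 1 (n - 1),
    Real.exp (-(lam n j) ^ 2 * t) * phiI n j x * phi j (kappa n y)

lemma integral_kappa (n : ℕ) (hn : 2 ≤ n) (F : ℝ → ℝ) :
    ∫ z in (0:ℝ)..Real.pi, F (kappa n z)
      = ∑ m ∈ Finset.range n, (Real.pi / n) * F ((m:ℝ) * (Real.pi / n)) := by
  have hn0 : (0:ℝ) < n := by positivity
  have hn' : (n:ℝ) ≠ 0 := hn0.ne'
  set h : ℝ := Real.pi / n with hh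
  have hpos : 0 < h := by positivity
  have heq : ∀ m : ℕ, (fun z => F (kappa n z))
      =ᵐ[MeasureTheory.volume.restrict (Set.Ioc ((m:ℝ)*h) (((m:ℝ)+1)*h))]
      (fun _ => F ((m:ℝ) * h)) := by
    intro m
    rw [← MeasureTheory.Measure.restrict_congr_set MeasureTheory.Ioo_ae_eq_Ioc]
    filter_upwards [MeasureTheory.ae_restrict_mem measurableSet_Ioo] with z hz
    have hfl : ⌊z / h⌋ = (m:ℤ) := by
      rw [Int.floor_eq_iff]
      constructor
      · push_cast
        rw [le_div_iff₀ hpos]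
        exact hz.1.le
      · push_cast
        rw [div_lt_iff₀ hpos]
        exact hz.2
    simp only [kappa, ← hh, hfl]
    push_cast
    ring_nf
  have hint : ∀ m : ℕ, IntervalIntegrable (fun z => F (kappa n z))
      MeasureTheory.volume ((m:ℝ)*h) (((m:ℝ)+1)*h) := by
    intro m
    have hle : (m:ℝ)*h ≤ ((m:ℝ)+1)*h := by nlinarith
    rw [intervalIntegrable_iff_integrableOn_Ioc_of_le hle]
    exact (MeasureTheory.integrableOn_const
      measure_Ioc_lt_top.ne).congr (heq m).symm
  have hpiece : ∀ m : ℕ, (∫ z in ((m:ℝ)*h)..(((m:ℝ)+1)*h), F (kappa n z)) = h * F ((m:ℝ)*h) := by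
    intro m
    have hle : (m:ℝ)*h ≤ ((m:ℝ)+1)*h := by nlinarith
    rw [intervalIntegral.integral_of_le hle, MeasureTheory.integral_congr_ae (heq m),
      MeasureTheory.setIntegral_const, Real.volume_real_Ioc_of_le hle]
    rw [smul_eq_mul]
    ring_nf
  have hadj : ∑ m ∈ Finset.range n,
      (∫ z in ((m:ℝ)*h)..(((m:ℝ)+1)*h), F (kappa n z)) = ∫ z in (0:ℝ)..Real.pi, F (kappa n z) := by
    have := intervalIntegral.sum_integral_adjacent_intervals
      (a := fun m : ℕ => (m:ℝ) * h) (n := n) (f := fun z => F (kappa n z))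
      (μ := MeasureTheory.volume) ?_
    · have ha0 : ((0:ℕ):ℝ) * h = 0 := by norm_num
      have han : ((n:ℕ):ℝ) * h = Real.pi := by rw [hh]; field_simp
      rw [ha0, han] at this
      rw [← this]
      refine Finset.sum_congr rfl fun m _ => ?_
      push_cast
      ring_nf
    · intro k _
      have := hint k
      push_cast
      convert this using 2 <;> push_cast <;> ring
  rw [← hadj, Finset.sum_congr rfl fun m _ => hpiece m]

lemma hphi_mul : ∀ (j k : ℕ) (y : ℝ), phi j y * phi k y
    = (2/Real.pi) * (Real.sin ((j:ℝ)*y) * Real.sin ((k:ℝ)*y)) := by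
  intro j k y
  unfold phi
  have : Real.sqrt (2/Real.pi) * Real.sin ((j:ℝ)*y) * (Real.sqrt (2/Real.pi) * Real.sin ((k:ℝ)*y))
      = (Real.sqrt (2/Real.pi) * Real.sqrt (2/Real.pi)) * (Real.sin ((j:ℝ)*y) * Real.sin ((k:ℝ)*y)) := by
    ring
  rw [this, Real.mul_self_sqrt (by positivity)]

lemma integral_sq (n : ℕ) (hn : 2 ≤ n) (b : ℕ → ℝ) :
    ∫ z in (0:ℝ)..Real.pi, (∑ j ∈ Finset.Icc 1 (n-1), b j * phi j (kappa n z))^2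
      = ∑ j ∈ Finset.Icc 1 (n-1), (b j)^2 := by
  have hn0 : (0:ℝ) < n := by positivity
  have hn' : (n:ℝ) ≠ 0 := hn0.ne'
  rw [integral_kappa n hn (fun y => (∑ j ∈ Finset.Icc 1 (n-1), b j * phi j y)^2)]
  have expand : ∀ m : ℕ, (Real.pi/(n:ℝ)) * (∑ j ∈ Finset.Icc 1 (n-1), b j * phi j ((m:ℝ)*(Real.pi/n)))^2
      = ∑ j ∈ Finset.Icc 1 (n-1), ∑ k ∈ Finset.Icc 1 (n-1),
          (b j * b k * (2/Real.pi) * (Real.pi/n)) *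
            (Real.sin ((j:ℝ)*((m:ℝ)*(Real.pi/n))) * Real.sin ((k:ℝ)*((m:ℝ)*(Real.pi/n)))) := by
    intro m
    rw [sq, Finset.sum_mul_sum, Finset.mul_sum]
    refine Finset.sum_congr rfl fun j _ => ?_
    rw [Finset.mul_sum]
    refine Finset.sum_congr rfl fun k _ => ?_
    have : (b j * phi j ((m:ℝ)*(Real.pi/n))) * (b k * phi k ((m:ℝ)*(Real.pi/n)))
        = (b j * b k) * (phi j ((m:ℝ)*(Real.pi/n)) * phi k ((m:ℝ)*(Real.pi/n))) := by ring
    rw [this, hphi_mul]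
    ring
  rw [Finset.sum_congr rfl (fun m _ => expand m), Finset.sum_comm]
  rw [Finset.sum_congr rfl (fun j (_ : j ∈ Finset.Icc 1 (n-1)) => Finset.sum_comm)]
  have inner : ∀ j ∈ Finset.Icc 1 (n-1), ∀ k ∈ Finset.Icc 1 (n-1),
      ∑ m ∈ Finset.range n, (b j * b k * (2/Real.pi) * (Real.pi/n)) *
          (Real.sin ((j:ℝ)*((m:ℝ)*(Real.pi/n))) * Real.sin ((k:ℝ)*((m:ℝ)*(Real.pi/n))))
        = if j = k then b j * b k else 0 := by
    intro j hj k hk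
    rw [← Finset.mul_sum, sum_sin_sin n j k hn hj hk]
    by_cases hjk : j = k
    · rw [if_pos hjk, if_pos hjk]
      field_simp
    · rw [if_neg hjk, if_neg hjk, mul_zero]
  rw [Finset.sum_congr rfl (fun j hj => Finset.sum_congr rfl (fun k hk => inner j hj k hk))]
  refine Finset.sum_congr rfl fun j hj => ?_
  rw [Finset.sum_ite_eq (Finset.Icc 1 (n-1)) j (fun k => b j * b k), if_pos hj]
  ring

lemma phi_bound (j : ℕ) (y : ℝ) : |phi j y| ≤ Real.sqrt (2/Real.pi) := by
  unfold phi
  rw [abs_mul, abs_of_nonneg (Real.sqrt_nonneg _)]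
  calc Real.sqrt (2/Real.pi) * |Real.sin ((j:ℝ)*y)| ≤ Real.sqrt (2/Real.pi) * 1 := by
        exact mul_le_mul_of_nonneg_left (Real.abs_sin_le_one _) (Real.sqrt_nonneg _)
    _ = Real.sqrt (2/Real.pi) := mul_one _

lemma phiI_bound (n j : ℕ) (hn : 2 ≤ n) (x : ℝ) : |phiI n j x| ≤ Real.sqrt (2/Real.pi) := by
  have hn0 : (0:ℝ) < n := by positivity
  have hn' : (n:ℝ) ≠ 0 := hn0.ne'
  have hf : (n:ℝ)*x/Real.pi - ((⌊x/(Real.pi/n)⌋ : ℤ):ℝ) = Int.fract (x/(Real.pi/n)) := by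
    rw [Int.fract]
    have : (n:ℝ)*x/Real.pi = x/(Real.pi/n) := by
      field_simp
    rw [this]
  set f := Int.fract (x/(Real.pi/n)) with hfdef
  have hf0 : 0 ≤ f := Int.fract_nonneg _
  have hf1 : f ≤ 1 := (Int.fract_lt_one _).le
  have hrepr : phiI n j x = (1 - f) * phi j (kappa n x) + f * phi j (kappa n x + Real.pi/n) := by
    unfold phiI
    rw [hf]
    ring
  rw [hrepr]
  calc |(1 - f) * phi j (kappa n x) + f * phi j (kappa n x + Real.pi/n)|
      ≤ |(1 - f) * phi j (kappa n x)| + |f * phi j (kappa n x + Real.pi/n)| := abs_add_le _ _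
    _ = (1 - f) * |phi j (kappa n x)| + f * |phi j (kappa n x + Real.pi/n)| := by
        rw [abs_mul, abs_mul, abs_of_nonneg (by linarith), abs_of_nonneg hf0]
    _ ≤ (1 - f) * Real.sqrt (2/Real.pi) + f * Real.sqrt (2/Real.pi) := by
        gcongr
        · exact phi_bound _ _
        · exact phi_bound _ _
    _ = Real.sqrt (2/Real.pi) := by ring

lemma lam_sq_lower (n j : ℕ) (hn : 2 ≤ n) (hj : j ∈ Finset.Icc 1 (n-1)) :
    (16/Real.pi^4) * (j:ℝ)^4 ≤ (lam n j)^2 := by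
  obtain ⟨hj1, hjn⟩ := Finset.mem_Icc.1 hj
  have hn0 : (0:ℝ) < n := by positivity
  have hj1' : (1:ℝ) ≤ (j:ℝ) := by exact_mod_cast hj1
  have hjn' : (j:ℝ) ≤ (n:ℝ) := by
    have : j ≤ n := by omega
    exact_mod_cast this
  have hpi := Real.pi_pos
  set θ := (j:ℝ) * Real.pi / (2*n) with hθ
  have hθ0 : 0 < θ := by positivity
  have hθhalf : θ ≤ Real.pi/2 := by
    rw [hθ, div_le_div_iff₀ (by positivity) (by norm_num)]
    nlinarith
  have hsin := Real.mul_le_sin hθ0.le hθhalf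
  have hsinpos : 0 < Real.sin θ := lt_of_lt_of_le (by positivity) hsin
  have hq : 4/Real.pi^2 ≤ Real.sin θ ^ 2 / θ ^ 2 := by
    rw [le_div_iff₀ (by positivity)]
    have h1 : (2/Real.pi * θ)^2 ≤ Real.sin θ ^ 2 := pow_le_pow_left₀ (by positivity) hsin 2
    calc 4/Real.pi^2 * θ^2 = (2/Real.pi * θ)^2 := by
          field_simp
          ring
      _ ≤ Real.sin θ ^ 2 := h1
  have hlam : lam n j = -((j:ℝ)^2) * (Real.sin θ ^ 2 / θ ^ 2) := rfl
  rw [hlam]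
  have hqpos : 0 < Real.sin θ ^ 2 / θ ^ 2 := by positivity
  have key : (4/Real.pi^2)^2 ≤ (Real.sin θ ^ 2 / θ ^ 2)^2 := pow_le_pow_left₀ (by positivity) hq 2
  have : (-((j:ℝ)^2) * (Real.sin θ ^ 2 / θ ^ 2))^2 = (j:ℝ)^4 * (Real.sin θ ^ 2 / θ ^ 2)^2 := by
    ring
  rw [this]
  have h16 : (16:ℝ)/Real.pi^4 = (4/Real.pi^2)^2 := by
    field_simp
    ring
  rw [h16]
  nlinarith [key, sq_nonneg ((j:ℝ)^2)]

lemma one_sub_exp_le_rpow (a p : ℝ) (ha : 0 ≤ a) (hp0 : 0 < p) (hp1 : p ≤ 1) :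
    1 - Real.exp (-a) ≤ a ^ p := by
  rcases le_or_gt a 1 with h1 | h1
  · have h2 : 1 - Real.exp (-a) ≤ a := by
      have := Real.add_one_le_exp (-a)
      linarith
    rcases eq_or_lt_of_le ha with h0 | h0
    · rw [← h0, neg_zero, Real.exp_zero, Real.zero_rpow hp0.ne']
      norm_num
    · calc 1 - Real.exp (-a) ≤ a := h2
        _ = a ^ (1:ℝ) := (Real.rpow_one a).symm
        _ ≤ a ^ p := Real.rpow_le_rpow_of_exponent_ge h0 h1 hp1
  · have hle1 : 1 - Real.exp (-a) ≤ 1 := by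
      have := Real.exp_pos (-a)
      linarith
    calc 1 - Real.exp (-a) ≤ 1 := hle1
      _ ≤ a ^ p := Real.one_le_rpow h1.le hp0.le

lemma integral_exp_aux (c A u v : ℝ) (hc : 0 < c) :
    ∫ r in u..v, Real.exp (-c*(A - r))
      = (Real.exp (-c*(A-v)) - Real.exp (-c*(A-u)))/c := by
  have hderiv : ∀ r ∈ Set.uIcc u v,
      HasDerivAt (fun r => Real.exp (-c*(A-r))/c) (Real.exp (-c*(A-r))) r := by
    intro r _
    have h1 : HasDerivAt (fun r : ℝ => -c*(A-r)) (-c * (-1)) r :=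
      ((hasDerivAt_id r).const_sub A).const_mul (-c)
    have h2 := (h1.exp).div_const c
    have h3 : Real.exp (-c*(A-r)) * (-c * (-1)) / c = Real.exp (-c*(A-r)) := by
      field_simp
    rw [h3] at h2
    exact h2
  have hcont : IntervalIntegrable (fun r => Real.exp (-c*(A-r))) MeasureTheory.volume u v := by
    apply Continuous.intervalIntegrable
    fun_prop
  have := intervalIntegral.integral_eq_sub_of_hasDerivAt hderiv hcont
  rw [this]
  ring

set_option maxHeartbeats 1000000 in
lemma perj_bound (n j : ℕ) (hn : 2 ≤ n) (hj : j ∈ Finset.Icc 1 (n-1)) (x s t p : ℝ)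
    (hs : 0 ≤ s) (hst : s < t) (hp0 : 0 < p) (hp1 : p ≤ 1) :
    (∫ r in (0:ℝ)..s,
        ((Real.exp (-(lam n j)^2*(t-r)) - Real.exp (-(lam n j)^2*(s-r))) * phiI n j x)^2)
    + (∫ r in s..t, (Real.exp (-(lam n j)^2*(t-r)) * phiI n j x)^2)
    ≤ (3/Real.pi) * ((lam n j)^2)^(p-1) * (t-s)^p := by
  have hpi := Real.pi_pos
  set L : ℝ := (lam n j)^2 with hLdef
  have hj1 : 1 ≤ j := (Finset.mem_Icc.1 hj).1
  have hL0 : 0 < L := by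
    have hlow := lam_sq_lower n j hn hj
    have : (0:ℝ) < 16/Real.pi^4 * (j:ℝ)^4 := by
      have : (1:ℝ) ≤ (j:ℝ) := by exact_mod_cast hj1
      positivity
    linarith
  set φ : ℝ := phiI n j x with hφdef
  have hφ2 : φ^2 ≤ 2/Real.pi := by
    have h1 := phiI_bound n j hn x
    calc φ^2 = |φ|^2 := (sq_abs φ).symm
      _ ≤ Real.sqrt (2/Real.pi) ^ 2 := pow_le_pow_left₀ (abs_nonneg _) h1 2
      _ = 2/Real.pi := Real.sq_sqrt (by positivity)
  have hφ0 : 0 ≤ φ^2 := sq_nonneg φ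
  set τ : ℝ := t - s with hτdef
  have hτ0 : 0 < τ := by simp [hτdef]; linarith
  set E : ℝ := Real.exp (-(L*τ)) with hEdef
  have hE0 : 0 < E := Real.exp_pos _
  have hE1 : E ≤ 1 := by
    rw [hEdef, Real.exp_le_one_iff]
    nlinarith
  -- first integral
  have hi1 : ∀ r : ℝ, ((Real.exp (-L*(t-r)) - Real.exp (-L*(s-r))) * φ)^2
      = (φ^2 * (1-E)^2) * Real.exp (-(2*L)*(s-r)) := by
    intro r
    have he : Real.exp (-L*(t-r)) = Real.exp (-L*(s-r)) * E := by
      rw [hEdef, ← Real.exp_add]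
      congr 1
      rw [hτdef]
      ring
    have he2 : Real.exp (-(2*L)*(s-r)) = Real.exp (-L*(s-r)) * Real.exp (-L*(s-r)) := by
      rw [← Real.exp_add]
      congr 1
      ring
    rw [he, he2]
    ring
  have hI1 : (∫ r in (0:ℝ)..s,
      ((Real.exp (-L*(t-r)) - Real.exp (-L*(s-r))) * φ)^2)
      = (φ^2 * (1-E)^2) * ((1 - Real.exp (-(2*L)*s))/(2*L)) := by
    simp only [hi1]
    rw [intervalIntegral.integral_const_mul, integral_exp_aux (2*L) s 0 s (by positivity)]
    congr 1
    rw [sub_self, sub_zero, mul_zero, Real.exp_zero]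
  have hI2 : (∫ r in s..t, (Real.exp (-L*(t-r)) * φ)^2)
      = φ^2 * ((1 - Real.exp (-(2*L)*τ))/(2*L)) := by
    have hi2 : ∀ r : ℝ, (Real.exp (-L*(t-r)) * φ)^2 = φ^2 * Real.exp (-(2*L)*(t-r)) := by
      intro r
      have he2 : Real.exp (-(2*L)*(t-r)) = Real.exp (-L*(t-r)) * Real.exp (-L*(t-r)) := by
        rw [← Real.exp_add]
        congr 1
        ring
      rw [he2]
      ring
    simp only [hi2]
    rw [intervalIntegral.integral_const_mul, integral_exp_aux (2*L) t s t (by positivity)]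
    rw [sub_self, mul_zero, Real.exp_zero, ← hτdef]
  have hEbound : (1-E) ≤ (L*τ)^p := by
    have h := one_sub_exp_le_rpow (L*τ) p (by positivity) hp0 hp1
    rw [hEdef]
    exact h
  have hrp0 : (0:ℝ) ≤ (L*τ)^p := Real.rpow_nonneg (by positivity) _
  have h1E0 : 0 ≤ 1 - E := by linarith
  have hB1 : (1 - Real.exp (-(2*L)*s))/(2*L) ≤ 1/(2*L) := by
    gcongr
    have := Real.exp_pos (-(2*L)*s)
    linarith
  have hB10 : 0 ≤ (1 - Real.exp (-(2*L)*s))/(2*L) := by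
    apply div_nonneg _ (by positivity)
    have : Real.exp (-(2*L)*s) ≤ 1 := by
      rw [Real.exp_le_one_iff]
      nlinarith
    linarith
  have hB20 : 0 ≤ (1 - Real.exp (-(2*L)*τ))/(2*L) := by
    apply div_nonneg _ (by positivity)
    have : Real.exp (-(2*L)*τ) ≤ 1 := by
      rw [Real.exp_le_one_iff]
      nlinarith
    linarith
  have h2bound : 1 - Real.exp (-(2*L)*τ) ≤ 2 * (L*τ)^p := by
    have h1 := one_sub_exp_le_rpow (2*(L*τ)) p (by positivity) hp0 hp1
    have h2 : (2*(L*τ))^p = 2^p * (L*τ)^p := Real.mul_rpow (by norm_num) (by positivity)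
    have h3 : (2:ℝ)^p ≤ 2 := by
      calc (2:ℝ)^p ≤ (2:ℝ)^(1:ℝ) := Real.rpow_le_rpow_of_exponent_le one_le_two hp1
        _ = 2 := Real.rpow_one 2
    have h4 : Real.exp (-(2*L)*τ) = Real.exp (-(2*(L*τ))) := by
      congr 1
      ring
    have h5 : (2:ℝ)^p * (L*τ)^p ≤ 2 * (L*τ)^p := mul_le_mul_of_nonneg_right h3 hrp0
    rw [h2] at h1
    rw [h4]
    linarith
  rw [hI1, hI2]
  have ht1 : φ^2*(1-E)^2 * ((1 - Real.exp (-(2*L)*s))/(2*L))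
      ≤ (2/Real.pi) * (L*τ)^p * (1/(2*L)) := by
    have a1 : (1-E)^2 ≤ (L*τ)^p := by
      have a0 : (1-E)^2 ≤ 1-E := by nlinarith [mul_nonneg h1E0 hE0.le]
      linarith
    have a2 : φ^2*(1-E)^2 ≤ (2/Real.pi) * (L*τ)^p :=
      mul_le_mul hφ2 a1 (sq_nonneg _) (by positivity)
    exact mul_le_mul a2 hB1 hB10 (by positivity)
  have ht2 : φ^2 * ((1 - Real.exp (-(2*L)*τ))/(2*L))
      ≤ (2/Real.pi) * ((2 * (L*τ)^p) * (1/(2*L))) := by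
    have b1 : (1 - Real.exp (-(2*L)*τ))/(2*L) ≤ (2 * (L*τ)^p) * (1/(2*L)) := by
      rw [mul_one_div]
      gcongr
    exact mul_le_mul hφ2 b1 hB20 (by positivity)
  calc φ^2*(1-E)^2 * ((1 - Real.exp (-(2*L)*s))/(2*L))
        + φ^2 * ((1 - Real.exp (-(2*L)*τ))/(2*L))
      ≤ (2/Real.pi) * (L*τ)^p * (1/(2*L)) + (2/Real.pi) * ((2 * (L*τ)^p) * (1/(2*L))) :=
        add_le_add ht1 ht2
    _ = (3/Real.pi) * L^(p-1) * τ^p := by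
        rw [Real.mul_rpow hL0.le hτ0.le, Real.rpow_sub_one hL0.ne']
        field_simp
        ring

set_option maxHeartbeats 1000000 in
/-- For every `γ ∈ (0, 3/8)` there is `C_γ > 0` (independent of `n`) such that for every
`n ≥ 2`, `x ∈ [0,π]`, `0 ≤ s < t ≤ T`:
`∫_0^s ∫_0^π |G^n_{t−r}(x,z) − G^n_{s−r}(x,z)|² dz dr + ∫_s^t ∫_0^π |G^n_{t−r}(x,z)|² dz dr
 ≤ C_γ |t−s|^{2γ}`. -/
theorem stmt12 (T : ℝ) (hT : 0 < T) (γ : ℝ) (hγ : γ ∈ Set.Ioo (0 : ℝ) (3 / 8)) :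
    ∃ C : ℝ, 0 < C ∧ ∀ n : ℕ, 2 ≤ n → ∀ x ∈ Set.Icc (0 : ℝ) Real.pi,
      ∀ s t : ℝ, 0 ≤ s → s < t → t ≤ T →
      (∫ r in (0 : ℝ)..s, ∫ z in (0 : ℝ)..Real.pi,
          |Gn n (t - r) x z - Gn n (s - r) x z| ^ 2)
        + (∫ r in s..t, ∫ z in (0 : ℝ)..Real.pi, |Gn n (t - r) x z| ^ 2)
      ≤ C * |t - s| ^ (2 * γ) := by
  obtain ⟨hγ0, hγ38⟩ := hγ
  have hpi := Real.pi_pos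
  set p : ℝ := 2*γ with hpdef
  have hp0 : 0 < p := by linarith
  have hp34 : p < 3/4 := by simp only [hpdef]; linarith
  have hp1 : p ≤ 1 := by linarith
  have hsummable : Summable (fun j : ℕ => (j:ℝ) ^ (4*(p-1))) :=
    Real.summable_nat_rpow.2 (by linarith)
  set S : ℝ := ∑' j : ℕ, (j:ℝ) ^ (4*(p-1)) with hSdef
  have hS0 : 0 ≤ S := tsum_nonneg fun j => Real.rpow_nonneg (Nat.cast_nonneg j) _
  have hcpos : (0:ℝ) < (16/Real.pi^4) ^ (p-1) := Real.rpow_pos_of_pos (by positivity) _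
  refine ⟨3/Real.pi * (16/Real.pi^4)^(p-1) * S + 1, by positivity, ?_⟩
  intro n hn x hx s t hs hst htT
  have hτ0 : 0 < t - s := by linarith
  have hτp0 : (0:ℝ) ≤ (t-s)^p := Real.rpow_nonneg hτ0.le _
  have hb1 : ∀ r : ℝ, (∫ z in (0:ℝ)..Real.pi, |Gn n (t-r) x z - Gn n (s-r) x z|^2)
      = ∑ j ∈ Finset.Icc 1 (n-1),
          ((Real.exp (-(lam n j)^2*(t-r)) - Real.exp (-(lam n j)^2*(s-r))) * phiI n j x)^2 := by
    intro r
    have hG : ∀ z : ℝ, Gn n (t-r) x z - Gn n (s-r) x z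
        = ∑ j ∈ Finset.Icc 1 (n-1),
            ((Real.exp (-(lam n j)^2*(t-r)) - Real.exp (-(lam n j)^2*(s-r))) * phiI n j x)
              * phi j (kappa n z) := by
      intro z
      unfold Gn
      rw [← Finset.sum_sub_distrib]
      exact Finset.sum_congr rfl fun j _ => by ring
    simp only [hG, sq_abs]
    exact integral_sq n hn _
  have hb2 : ∀ r : ℝ, (∫ z in (0:ℝ)..Real.pi, |Gn n (t-r) x z|^2)
      = ∑ j ∈ Finset.Icc 1 (n-1), (Real.exp (-(lam n j)^2*(t-r)) * phiI n j x)^2 := by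
    intro r
    have hG : ∀ z : ℝ, Gn n (t-r) x z
        = ∑ j ∈ Finset.Icc 1 (n-1),
            (Real.exp (-(lam n j)^2*(t-r)) * phiI n j x) * phi j (kappa n z) := by
      intro z
      unfold Gn
      exact Finset.sum_congr rfl fun j _ => by ring
    simp only [hG, sq_abs]
    exact integral_sq n hn _
  simp only [hb1, hb2]
  have hint1 : ∀ j ∈ Finset.Icc 1 (n-1), IntervalIntegrable
      (fun r => ((Real.exp (-(lam n j)^2*(t-r)) - Real.exp (-(lam n j)^2*(s-r))) * phiI n j x)^2)
      MeasureTheory.volume 0 s :=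
    fun j _ => Continuous.intervalIntegrable (by fun_prop) _ _
  have hint2 : ∀ j ∈ Finset.Icc 1 (n-1), IntervalIntegrable
      (fun r => (Real.exp (-(lam n j)^2*(t-r)) * phiI n j x)^2)
      MeasureTheory.volume s t :=
    fun j _ => Continuous.intervalIntegrable (by fun_prop) _ _
  rw [intervalIntegral.integral_finset_sum hint1, intervalIntegral.integral_finset_sum hint2,
    ← Finset.sum_add_distrib]
  have hlamle : ∀ j ∈ Finset.Icc 1 (n-1),
      ((lam n j)^2)^(p-1) ≤ (16/Real.pi^4)^(p-1) * (j:ℝ)^(4*(p-1)) := by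
    intro j hj
    have hj1 : (1:ℝ) ≤ (j:ℝ) := by exact_mod_cast (Finset.mem_Icc.1 hj).1
    have hlow := lam_sq_lower n j hn hj
    have hpos : (0:ℝ) < 16/Real.pi^4 * (j:ℝ)^4 := by positivity
    have h1 : ((lam n j)^2)^(p-1) ≤ (16/Real.pi^4 * (j:ℝ)^4)^(p-1) :=
      Real.rpow_le_rpow_of_nonpos hpos hlow (by linarith)
    have h2 : (16/Real.pi^4 * (j:ℝ)^4)^(p-1) = (16/Real.pi^4)^(p-1) * ((j:ℝ)^4)^(p-1) :=
      Real.mul_rpow (by positivity) (by positivity)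
    have h3 : ((j:ℝ)^4)^(p-1) = (j:ℝ)^(4*(p-1)) := by
      rw [← Real.rpow_natCast (j:ℝ) 4, ← Real.rpow_mul (by positivity)]
      norm_num
    rw [h2, h3] at h1
    exact h1
  calc ∑ j ∈ Finset.Icc 1 (n-1),
        ((∫ r in (0:ℝ)..s,
          ((Real.exp (-(lam n j)^2*(t-r)) - Real.exp (-(lam n j)^2*(s-r))) * phiI n j x)^2)
        + (∫ r in s..t, (Real.exp (-(lam n j)^2*(t-r)) * phiI n j x)^2))
      ≤ ∑ j ∈ Finset.Icc 1 (n-1), (3/Real.pi) * ((lam n j)^2)^(p-1) * (t-s)^p :=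
        Finset.sum_le_sum fun j hj => perj_bound n j hn hj x s t p hs hst hp0 hp1
    _ ≤ ∑ j ∈ Finset.Icc 1 (n-1),
          (3/Real.pi) * ((16/Real.pi^4)^(p-1) * (j:ℝ)^(4*(p-1))) * (t-s)^p := by
        refine Finset.sum_le_sum fun j hj => ?_
        have := hlamle j hj
        apply mul_le_mul_of_nonneg_right _ hτp0
        apply mul_le_mul_of_nonneg_left this (by positivity)
    _ = 3/Real.pi * (16/Real.pi^4)^(p-1) * (t-s)^p
          * ∑ j ∈ Finset.Icc 1 (n-1), (j:ℝ)^(4*(p-1)) := by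
        rw [Finset.mul_sum]
        exact Finset.sum_congr rfl fun j _ => by ring
    _ ≤ 3/Real.pi * (16/Real.pi^4)^(p-1) * (t-s)^p * S := by
        apply mul_le_mul_of_nonneg_left _ (by positivity)
        exact Summable.sum_le_tsum _ (fun j _ => Real.rpow_nonneg (Nat.cast_nonneg j) _) hsummable
    _ ≤ (3/Real.pi * (16/Real.pi^4)^(p-1) * S + 1) * |t - s| ^ (2*γ) := by
        rw [abs_of_pos hτ0, ← hpdef]
        nlinarith [hτp0, hS0, hcpos, hpi]
end

section
/- For every α ∈ (0,1) there exists a constant C = C(α,T) > 0 (not depending on n) such that for every integer n ≥ 2, every x ∈ [0,π], and all 0 ≤ s < t ≤ T, ∫_s^t ∫_0^π |Δ_n G^n_{t−r}(x,z)| dz dr ≤ C |t−s|^{(3/8)α}. -/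
/-- `Δ_n G^n_t(x,y) = Σ_{j=1}^{n−1} λ_{j,n} e^{−λ_{j,n}²t} φ_{j,n}(x) φ_j(κ_n(y))`. -/
noncomputable def DGn (n : ℕ) (t x y : ℝ) : ℝ :=
  ∑ j ∈ Finset.Icc 1 (n - 1),
    lam n j * Real.exp (-(lam n j) ^ 2 * t) * phiI n j x * phi j (kappa n y)

open Real Finset MeasureTheory

lemma aux_cos_sum (n m : ℕ) (hn : 1 ≤ n) (hm0 : m ≠ 0) (hm : m < 2*n) :
    ∑ k ∈ Finset.range n, Real.cos (m*k*π/n) = if Even m then 0 else 1 := by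
  have hπ := Real.pi_pos
  have hn0 : (0:ℝ) < n := by exact_mod_cast Nat.pos_of_ne_zero (by omega)
  have hm0' : (0:ℝ) < m := by exact_mod_cast Nat.pos_of_ne_zero hm0
  set θ : ℝ := m*π/n with hθ
  have hθ0 : 0 < θ := by positivity
  have hθ2 : θ < 2*π := by
    rw [hθ, div_lt_iff₀ hn0]
    have : (m:ℝ) < 2*n := by exact_mod_cast hm
    nlinarith
  set ω : ℂ := Complex.exp (θ * Complex.I) with hω
  have hω1 : ω ≠ 1 := by
    intro h
    rcases Complex.exp_eq_one_iff.mp h with ⟨k, hk⟩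
    have h1 : (θ:ℂ) = (k:ℤ)*(2*π) := by
      have := mul_right_cancel₀ Complex.I_ne_zero (by rw [hk]; ring : (θ:ℂ)*Complex.I = ((k:ℤ)*(2*π))*Complex.I)
      exact this
    have h2 : θ = (k:ℤ)*(2*π) := by exact_mod_cast h1
    have hkpos : (0:ℝ) < (k:ℤ) := by nlinarith
    have : (1:ℤ) ≤ k := by exact_mod_cast by exact_mod_cast Int.lt_iff_add_one_le.mp (by exact_mod_cast hkpos : (0:ℤ) < k)
    have : (1:ℝ) ≤ (k:ℤ) := by exact_mod_cast this
    nlinarith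
  have key : ∀ k : ℕ, Real.cos ((m:ℝ)*k*π/n) = (ω^k).re := by
    intro k
    rw [hω, ← Complex.exp_nat_mul]
    have h3 : (k:ℂ)*(θ*Complex.I) = ((m*k*π/n : ℝ):ℂ) * Complex.I := by
      push_cast [hθ]; ring
    rw [h3, Complex.exp_ofReal_mul_I_re]
  have hgeom : ∑ k ∈ Finset.range n, ω^k = (ω^n - 1)/(ω - 1) := geom_sum_eq hω1 n
  have hωn : ω^n = (-1:ℂ)^m := by
    rw [hω, ← Complex.exp_nat_mul]
    have h4 : (n:ℂ)*(θ*Complex.I) = (m:ℕ)*(π*Complex.I) := by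
      push_cast [hθ]
      have : (n:ℂ) ≠ 0 := by exact_mod_cast (Nat.pos_of_ne_zero (by omega : n ≠ 0)).ne'
      field_simp
    rw [h4, Complex.exp_nat_mul, Complex.exp_pi_mul_I]
  have hre : ∑ k ∈ Finset.range n, Real.cos (m*k*π/n) = ((ω^n - 1)/(ω - 1)).re := by
    rw [← hgeom, Complex.re_sum]
    exact Finset.sum_congr rfl fun k _ => key k
  rw [hre]
  rcases Nat.even_or_odd m with he | ho
  · rw [he.neg_one_pow] at hωn
    simp [hωn, he]
  · rw [ho.neg_one_pow] at hωn
    simp only [Nat.not_even_iff_odd.mpr ho, if_false]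
    rw [hωn]
    have hcsθ : ω.re = Real.cos θ ∧ ω.im = Real.sin θ := by
      constructor
      · exact Complex.exp_ofReal_mul_I_re θ
      · exact Complex.exp_ofReal_mul_I_im θ
    have hc1 : Real.cos θ ≠ 1 := by
      intro hc
      apply hω1
      have hs : Real.sin θ = 0 := by nlinarith [Real.sin_sq_add_cos_sq θ]
      apply Complex.ext <;> simp [hcsθ.1, hcsθ.2, hc, hs]
    rw [Complex.div_re]
    have h5 : Complex.normSq (ω - 1) = 2 - 2*Real.cos θ := by
      rw [Complex.normSq_apply]
      simp only [Complex.sub_re, Complex.sub_im, Complex.one_re, Complex.one_im, hcsθ.1, hcsθ.2]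
      nlinarith [Real.sin_sq_add_cos_sq θ]
    simp only [Complex.sub_re, Complex.sub_im, Complex.one_re, Complex.one_im, hcsθ.1, hcsθ.2, h5]
    have h6 : (2:ℝ) - 2*Real.cos θ ≠ 0 := by
      intro h; apply hc1; linarith
    simp only [Complex.neg_re, Complex.neg_im, Complex.one_re, Complex.one_im]
    field_simp
    ring

lemma aux_sin_ortho' (n : ℕ) (hn : 2 ≤ n) {j j' : ℕ} (hj1 : 1 ≤ j) (hj2 : j ≤ n-1)
    (hj1' : 1 ≤ j') (hj2' : j' ≤ n-1) (hle : j' ≤ j) :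
    ∑ k ∈ Finset.range n, Real.sin (j*k*π/n) * Real.sin (j'*k*π/n)
      = if j = j' then (n:ℝ)/2 else 0 := by
  set d := j - j' with hdd
  set σ := j + j' with hσσ
  have hd : (d:ℝ) = (j:ℝ) - j' := by rw [hdd, Nat.cast_sub hle]
  have hterm : ∀ k : ℕ, Real.sin (j*k*π/n) * Real.sin (j'*k*π/n)
      = (Real.cos ((d:ℝ)*k*π/n) - Real.cos ((σ:ℝ)*k*π/n))/2 := by
    intro k
    rw [show (d:ℝ)*k*π/n = j*k*π/n - j'*k*π/n by rw [hd]; ring,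
        show (σ:ℝ)*k*π/n = j*k*π/n + j'*k*π/n by rw [hσσ]; push_cast; ring,
        Real.cos_sub, Real.cos_add]
    ring
  rw [Finset.sum_congr rfl fun k _ => hterm k, ← Finset.sum_div, Finset.sum_sub_distrib]
  have hσ0 : σ ≠ 0 := by omega
  have hσ2n : σ < 2*n := by omega
  have hcσ : ∑ k ∈ Finset.range n, Real.cos ((σ:ℝ)*k*π/n) = if Even σ then 0 else 1 :=
    aux_cos_sum n σ (by omega) hσ0 hσ2n
  by_cases hjj : j = j'
  · have hd0 : d = 0 := by omega
    have hσe : Even σ := by subst hjj; exact ⟨j, rfl⟩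
    rw [hcσ, if_pos hσe, if_pos hjj, hd0]
    simp
  · have hd0 : d ≠ 0 := by omega
    have hd2n : d < 2*n := by omega
    have hcd : ∑ k ∈ Finset.range n, Real.cos ((d:ℝ)*k*π/n) = if Even d then 0 else 1 :=
      aux_cos_sum n d (by omega) hd0 hd2n
    have hpar : Even d ↔ Even σ := by
      rw [hdd, hσσ, Nat.even_sub hle, Nat.even_add]
    rw [hcd, hcσ, if_neg hjj]
    by_cases he : Even d
    · rw [if_pos he, if_pos (hpar.mp he)]; ring
    · rw [if_neg he, if_neg (fun h => he (hpar.mpr h))]; ring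

lemma aux_sin_ortho (n : ℕ) (hn : 2 ≤ n) {j j' : ℕ} (hj1 : 1 ≤ j) (hj2 : j ≤ n-1)
    (hj1' : 1 ≤ j') (hj2' : j' ≤ n-1) :
    ∑ k ∈ Finset.range n, Real.sin (j*k*π/n) * Real.sin (j'*k*π/n)
      = if j = j' then (n:ℝ)/2 else 0 := by
  rcases le_total j' j with hle | hle
  · exact aux_sin_ortho' n hn hj1 hj2 hj1' hj2' hle
  · rw [show (if j = j' then (n:ℝ)/2 else 0) = if j' = j then (n:ℝ)/2 else 0 by
      by_cases h : j = j' <;> simp [h, eq_comm] ]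
    rw [← aux_sin_ortho' n hn hj1' hj2' hj1 hj2 hle]
    exact Finset.sum_congr rfl fun k _ => mul_comm _ _

lemma aux_kappa_floor (n : ℕ) (hn : 2 ≤ n) (k : ℕ) {z : ℝ}
    (h1 : (k:ℝ)*(π/n) ≤ z) (h2 : z < ((k:ℝ)+1)*(π/n)) : kappa n z = (k:ℝ)*(π/n) := by
  have hπ := Real.pi_pos
  have hn0 : (0:ℝ) < n := by exact_mod_cast Nat.pos_of_ne_zero (by omega)
  have hh : (0:ℝ) < π/n := by positivity
  have hfl : ⌊z/(π/n)⌋ = (k:ℤ) := by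
    rw [Int.floor_eq_iff]
    constructor
    · push_cast
      rw [le_div_iff₀ hh]
      linarith
    · push_cast
      rw [div_lt_iff₀ hh]
      linarith
  rw [kappa, hfl]
  push_cast
  ring

lemma aux_kappa_integral (n : ℕ) (hn : 2 ≤ n) (G : ℝ → ℝ) :
    ∫ z in (0:ℝ)..π, G (kappa n z) = ∑ k ∈ Finset.range n, (π/n) * G ((k:ℝ)*(π/n)) := by
  have hπ := Real.pi_pos
  have hn0 : (0:ℝ) < n := by exact_mod_cast Nat.pos_of_ne_zero (by omega)
  have hh : (0:ℝ) < π/n := by positivity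
  set a : ℕ → ℝ := fun k => k*(π/n) with ha
  have hmono : ∀ k : ℕ, a k < a (k+1) := by
    intro k
    simp only [ha]
    push_cast
    nlinarith
  have hne : ∀ k : ℕ, ∀ᵐ z : ℝ, z ≠ a (k+1) := by
    intro k
    rw [MeasureTheory.ae_iff]
    simp only [not_not, Set.setOf_eq_eq_singleton]
    exact Real.volume_singleton
  have hval : ∀ k : ℕ, ∀ z : ℝ, z ∈ Set.Ioc (a k) (a (k+1)) → z ≠ a (k+1) →
      G (kappa n z) = G (a k) := by
    intro k z hz hz'
    rw [aux_kappa_floor n hn k (le_of_lt hz.1)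
      (by rw [show ((k:ℝ)+1)*(π/n) = a (k+1) by simp only [ha]; push_cast; ring]
          exact lt_of_le_of_ne hz.2 hz')]
  have hint : ∀ k : ℕ, IntervalIntegrable (fun z => G (kappa n z)) volume (a k) (a (k+1)) := by
    intro k
    rw [intervalIntegrable_iff]
    apply ((MeasureTheory.integrableOn_const_iff (C := G (a k))).mpr (Or.inr measure_Ioc_lt_top)).congr
    · rw [show a k ⊓ a (k+1) = a k from min_eq_left (hmono k).le,
          show a k ⊔ a (k+1) = a (k+1) from max_eq_right (hmono k).le]
      filter_upwards [MeasureTheory.ae_restrict_mem measurableSet_Ioc,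
        MeasureTheory.ae_restrict_of_ae (hne k)] with z hz hz'
      exact (hval k z hz hz').symm
  have hcell : ∀ k : ℕ, ∫ z in (a k)..(a (k+1)), G (kappa n z) = (π/n) * G (a k) := by
    intro k
    have hcong : ∫ z in (a k)..(a (k+1)), G (kappa n z) = ∫ _z in (a k)..(a (k+1)), G (a k) := by
      apply intervalIntegral.integral_congr_ae
      filter_upwards [hne k] with z hz' hz
      rw [Set.uIoc_of_le (hmono k).le] at hz
      exact hval k z hz hz'
    rw [hcong, intervalIntegral.integral_const, smul_eq_mul]
    have : a (k+1) - a k = π/n := by simp only [ha]; push_cast; ring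
    rw [this]
  have htot := intervalIntegral.sum_integral_adjacent_intervals (a := a) (n := n)
    (fun k _ => hint k)
  have ha0 : a 0 = 0 := by simp [ha]
  have han : a n = π := by
    simp only [ha]
    field_simp
  rw [ha0, han] at htot
  rw [← htot]
  exact Finset.sum_congr rfl fun k _ => hcell k

lemma aux_phi_bound (j : ℕ) (y : ℝ) : |phi j y| ≤ Real.sqrt (2/π) := by
  rw [phi, abs_mul, abs_of_nonneg (Real.sqrt_nonneg _)]
  have h1 : |Real.sin (j*y)| ≤ 1 := Real.abs_sin_le_one _
  nlinarith [Real.sqrt_nonneg (2/π), abs_nonneg (Real.sin (j*y))]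

lemma aux_phiI_bound (n j : ℕ) (hn : 2 ≤ n) (x : ℝ) : |phiI n j x| ≤ Real.sqrt (2/π) := by
  have hπ := Real.pi_pos
  have hn0 : (0:ℝ) < n := by exact_mod_cast Nat.pos_of_ne_zero (by omega)
  set θ : ℝ := (n:ℝ) * x / π - (⌊x / (π/n)⌋ : ℝ) with hθ
  have hθfract : θ = Int.fract (x / (π/n)) := by
    rw [hθ, Int.fract]
    congr 1
    field_simp
  have hθ0 : 0 ≤ θ := by rw [hθfract]; exact Int.fract_nonneg _
  have hθ1 : θ ≤ 1 := by rw [hθfract]; exact (Int.fract_lt_one _).le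
  have hrw : phiI n j x = (1-θ) * phi j (kappa n x) + θ * phi j (kappa n x + π/n) := by
    rw [phiI, hθ]; ring
  rw [hrw]
  have h1 := aux_phi_bound j (kappa n x)
  have h2 := aux_phi_bound j (kappa n x + π/n)
  calc |(1-θ) * phi j (kappa n x) + θ * phi j (kappa n x + π/n)|
      ≤ |(1-θ) * phi j (kappa n x)| + |θ * phi j (kappa n x + π/n)| := abs_add_le _ _
    _ = (1-θ) * |phi j (kappa n x)| + θ * |phi j (kappa n x + π/n)| := by
        rw [abs_mul, abs_mul, abs_of_nonneg (by linarith), abs_of_nonneg hθ0]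
    _ ≤ Real.sqrt (2/π) := by
        nlinarith [mul_nonneg (by linarith : (0:ℝ) ≤ 1-θ)
            (by linarith : (0:ℝ) ≤ Real.sqrt (2/π) - |phi j (kappa n x)|),
          mul_nonneg hθ0
            (by linarith : (0:ℝ) ≤ Real.sqrt (2/π) - |phi j (kappa n x + π/n)|)]

lemma aux_lam_sq (n j : ℕ) (hn : 2 ≤ n) (hj1 : 1 ≤ j) (hj2 : j ≤ n-1) :
    (4/π^2)^2 * (j:ℝ)^4 ≤ (lam n j)^2 := by
  have hπ := Real.pi_pos
  have hn0 : (0:ℝ) < n := by exact_mod_cast Nat.pos_of_ne_zero (by omega)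
  have hj0 : (0:ℝ) < j := by exact_mod_cast hj1
  have hjn : (j:ℝ) ≤ n := by exact_mod_cast by omega
  set θ : ℝ := (j:ℝ) * π / (2*n) with hθdef
  have hθ0 : 0 < θ := by positivity
  have hθhalf : θ ≤ π/2 := by
    rw [hθdef, div_le_div_iff₀ (by positivity) (by positivity)]
    nlinarith
  have hsin := Real.mul_le_sin hθ0.le hθhalf
  have hc : 4/π^2 ≤ Real.sin θ ^2 / θ^2 := by
    rw [le_div_iff₀ (by positivity)]
    have h2 : 0 < 2/π*θ := by positivity
    have key : (4:ℝ)/π^2 = (2/π)^2 := by rw [div_pow]; norm_num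
    nlinarith [mul_le_mul hsin hsin h2.le (h2.le.trans hsin)]
  have hlam : lam n j = -((j:ℝ)^2) * (Real.sin θ^2 / θ^2) := rfl
  rw [hlam]
  have hc0 : (0:ℝ) < 4/π^2 := by positivity
  nlinarith [mul_le_mul hc hc hc0.le (hc0.le.trans hc), pow_nonneg hj0.le 4,
    pow_pos hj0 4]

lemma aux_exp_bound {u γ : ℝ} (hu : 0 ≤ u) (hγ0 : 0 ≤ γ) (hγ2 : γ ≤ 2) :
    u ^ γ * Real.exp (-(2*u)) ≤ 1 := by
  rcases le_total u 1 with h | h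
  · have h1 : u^γ ≤ 1 := Real.rpow_le_one hu h hγ0
    have h2 : Real.exp (-(2*u)) ≤ 1 := Real.exp_le_one_iff.mpr (by linarith)
    nlinarith [Real.exp_pos (-(2*u)), Real.rpow_nonneg hu γ]
  · have h1 : u^γ ≤ u^(2:ℝ) := Real.rpow_le_rpow_of_exponent_le h hγ2
    have h2 : u^(2:ℝ) = u^2 := by
      rw [show (2:ℝ) = ((2:ℕ):ℝ) by norm_num, Real.rpow_natCast]
    have he : Real.exp (2*u) = Real.exp u ^ 2 := by
      rw [show (2:ℝ)*u = ((2:ℕ):ℝ)*u by norm_num, Real.exp_nat_mul]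
    have h3 : u^2 ≤ Real.exp (2*u) := by nlinarith [Real.add_one_le_exp u]
    have h4 : Real.exp (2*u) * Real.exp (-(2*u)) = 1 := by
      rw [← Real.exp_add]; norm_num
    calc u^γ * Real.exp (-(2*u)) ≤ Real.exp (2*u) * Real.exp (-(2*u)) := by
          apply mul_le_mul_of_nonneg_right _ (Real.exp_pos _).le
          rw [← h2] at h3
          exact h1.trans h3
      _ = 1 := h4

lemma aux_decomp {A ρ γ : ℝ} (hA : 0 < A) (hρ : 0 < ρ) (hγ0 : 0 ≤ γ) (hγ2 : γ ≤ 2) :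
    A * Real.exp (-(2*(A*ρ))) ≤ A^(1-γ) * ρ^(-γ) := by
  have e1 : A^γ * A^(1-γ) = A := by
    rw [← Real.rpow_add hA]; ring_nf; exact Real.rpow_one A
  have e2 : ρ^γ * ρ^(-γ) = 1 := by
    rw [← Real.rpow_add hρ]; norm_num
  have key : A * Real.exp (-(2*(A*ρ)))
      = ((A*ρ)^γ * Real.exp (-(2*(A*ρ)))) * (A^(1-γ) * ρ^(-γ)) := by
    rw [Real.mul_rpow hA.le hρ.le,
        show A^γ*ρ^γ*Real.exp (-(2*(A*ρ)))*(A^(1-γ)*ρ^(-γ))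
          = (A^γ*A^(1-γ))*(ρ^γ*ρ^(-γ))*Real.exp (-(2*(A*ρ))) by ring, e1, e2]
    ring
  rw [key]
  have h1 := aux_exp_bound (mul_nonneg hA.le hρ.le) hγ0 hγ2
  have h2 : (0:ℝ) ≤ A^(1-γ)*ρ^(-γ) := by positivity
  nlinarith [Real.rpow_nonneg (mul_nonneg hA.le hρ.le) γ, (Real.exp_pos (-(2*(A*ρ)))).le]

lemma aux_parseval (n : ℕ) (hn : 2 ≤ n) (a : ℕ → ℝ) :
    ∑ k ∈ Finset.range n, (∑ j ∈ Finset.Icc 1 (n-1), a j * phi j ((k:ℝ)*(π/n)))^2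
      = ((n:ℝ)/π) * ∑ j ∈ Finset.Icc 1 (n-1), (a j)^2 := by
  have hπ := Real.pi_pos
  have hs2 : Real.sqrt (2/π)^2 = 2/π := Real.sq_sqrt (by positivity)
  have hterm : ∀ k : ℕ, (∑ j ∈ Finset.Icc 1 (n-1), a j * phi j ((k:ℝ)*(π/n)))^2
      = ∑ j ∈ Finset.Icc 1 (n-1), ∑ j' ∈ Finset.Icc 1 (n-1),
          (a j * a j' * (2/π)) * (Real.sin (j*k*π/n) * Real.sin (j'*k*π/n)) := by
    intro k
    rw [sq, Finset.sum_mul_sum]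
    refine Finset.sum_congr rfl fun j _ => Finset.sum_congr rfl fun j' _ => ?_
    rw [phi, phi, show (j:ℝ) * ((k:ℝ)*(π/n)) = (j:ℝ)*k*π/n by ring,
        show (j':ℝ) * ((k:ℝ)*(π/n)) = (j':ℝ)*k*π/n by ring]
    calc a j * (Real.sqrt (2/π) * Real.sin ((j:ℝ)*k*π/n))
          * (a j' * (Real.sqrt (2/π) * Real.sin ((j':ℝ)*k*π/n)))
        = (a j * a j' * Real.sqrt (2/π)^2) * (Real.sin ((j:ℝ)*k*π/n) * Real.sin ((j':ℝ)*k*π/n)) := by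
          ring
      _ = (a j * a j' * (2/π)) * (Real.sin ((j:ℝ)*k*π/n) * Real.sin ((j':ℝ)*k*π/n)) := by
          rw [hs2]
  rw [Finset.sum_congr rfl fun k _ => hterm k, Finset.sum_comm]
  have hswap : ∀ j ∈ Finset.Icc 1 (n-1),
      (∑ k ∈ Finset.range n, ∑ j' ∈ Finset.Icc 1 (n-1),
        (a j * a j' * (2/π)) * (Real.sin (j*k*π/n) * Real.sin (j'*k*π/n)))
      = (a j)^2 * ((n:ℝ)/π) := by
    intro j hj
    rw [Finset.sum_comm]
    have hin : ∀ j' ∈ Finset.Icc 1 (n-1),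
        (∑ k ∈ Finset.range n,
          (a j * a j' * (2/π)) * (Real.sin (j*k*π/n) * Real.sin (j'*k*π/n)))
        = (a j * a j' * (2/π)) * (if j = j' then (n:ℝ)/2 else 0) := by
      intro j' hj'
      rw [← Finset.mul_sum,
        aux_sin_ortho n hn (Finset.mem_Icc.mp hj).1 (Finset.mem_Icc.mp hj).2
          (Finset.mem_Icc.mp hj').1 (Finset.mem_Icc.mp hj').2]
    rw [Finset.sum_congr rfl hin]
    simp only [mul_ite, mul_zero]
    rw [Finset.sum_ite_eq, if_pos hj]
    field_simp
  rw [Finset.sum_congr rfl hswap, ← Finset.sum_mul]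
  ring

lemma aux_term_bound (n j : ℕ) (hn : 2 ≤ n) (hj1 : 1 ≤ j) (hj2 : j ≤ n-1) (x ρ γ : ℝ)
    (hρ : 0 < ρ) (hγ1 : 1 ≤ γ) (hγ2 : γ ≤ 2) :
    (lam n j * Real.exp (-(lam n j)^2 * ρ) * phiI n j x)^2
      ≤ (2/π) * (((4/π^2)^2)^(1-γ) * (j:ℝ)^(4*(1-γ))) * ρ^(-γ) := by
  have hπ := Real.pi_pos
  have hlamsq := aux_lam_sq n j hn hj1 hj2
  have hj0 : (0:ℝ) < j := by exact_mod_cast hj1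
  have hA0 : 0 < (lam n j)^2 := lt_of_lt_of_le (by positivity) hlamsq
  have hsq : (lam n j * Real.exp (-(lam n j)^2 * ρ) * phiI n j x)^2
      = (lam n j)^2 * Real.exp (-(2*((lam n j)^2*ρ))) * (phiI n j x)^2 := by
    rw [show -(2*((lam n j)^2*ρ)) = ((2:ℕ):ℝ) * (-(lam n j)^2*ρ) by push_cast; ring,
        Real.exp_nat_mul]
    ring
  rw [hsq]
  have hφ : (phiI n j x)^2 ≤ 2/π := by
    have hb := aux_phiI_bound n j hn x
    rw [← sq_abs]
    calc |phiI n j x|^2 ≤ Real.sqrt (2/π)^2 := by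
          apply pow_le_pow_left₀ (abs_nonneg _) hb
      _ = 2/π := Real.sq_sqrt (by positivity)
  have hd := aux_decomp hA0 hρ (by linarith) hγ2
  have hmono : ((lam n j)^2)^(1-γ) ≤ ((4/π^2)^2 * (j:ℝ)^4)^(1-γ) :=
    Real.rpow_le_rpow_of_nonpos (by positivity) hlamsq (by linarith)
  have hsplit : ((4/π^2)^2 * (j:ℝ)^4)^(1-γ) = ((4/π^2)^2)^(1-γ) * (j:ℝ)^(4*(1-γ)) := by
    rw [Real.mul_rpow (by positivity) (by positivity)]
    congr 1
    rw [← Real.rpow_natCast (j:ℝ) 4, ← Real.rpow_mul hj0.le]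
    norm_num
  have hexp0 : (0:ℝ) ≤ Real.exp (-(2*((lam n j)^2*ρ))) := (Real.exp_pos _).le
  calc (lam n j)^2 * Real.exp (-(2*((lam n j)^2*ρ))) * (phiI n j x)^2
      ≤ (lam n j)^2 * Real.exp (-(2*((lam n j)^2*ρ))) * (2/π) := by
        apply mul_le_mul_of_nonneg_left hφ (by positivity)
    _ ≤ (((lam n j)^2)^(1-γ) * ρ^(-γ)) * (2/π) :=
        mul_le_mul_of_nonneg_right hd (by positivity)
    _ = (2/π) * ((lam n j)^2)^(1-γ) * ρ^(-γ) := by ring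
    _ ≤ (2/π) * (((4/π^2)^2 * (j:ℝ)^4)^(1-γ)) * ρ^(-γ) := by
        apply mul_le_mul_of_nonneg_right
          (mul_le_mul_of_nonneg_left hmono (by positivity))
          (Real.rpow_nonneg hρ.le _)
    _ = (2/π) * (((4/π^2)^2)^(1-γ) * (j:ℝ)^(4*(1-γ))) * ρ^(-γ) := by rw [hsplit]

lemma aux_stepA (n : ℕ) (hn : 2 ≤ n) (x ρ : ℝ) :
    ∫ z in (0:ℝ)..π, |DGn n ρ x z|
      = ∑ k ∈ Finset.range n, (π/n) * |∑ j ∈ Finset.Icc 1 (n-1),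
          (lam n j * Real.exp (-(lam n j)^2 * ρ) * phiI n j x) * phi j ((k:ℝ)*(π/n))| := by
  have := aux_kappa_integral n hn (fun y => |∑ j ∈ Finset.Icc 1 (n-1),
      (lam n j * Real.exp (-(lam n j)^2 * ρ) * phiI n j x) * phi j y|)
  simpa [DGn] using this

/-- For every `α ∈ (0,1)` there is `C = C(α,T) > 0` (independent of `n`) such that for
every `n ≥ 2`, `x ∈ [0,π]`, `0 ≤ s < t ≤ T`:
`∫_s^t ∫_0^π |Δ_n G^n_{t−r}(x,z)| dz dr ≤ C|t−s|^{(3/8)α}`. -/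
theorem stmt13 (T : ℝ) (hT : 0 < T) (α : ℝ) (hα : α ∈ Set.Ioo (0 : ℝ) 1) :
    ∃ C : ℝ, 0 < C ∧ ∀ n : ℕ, 2 ≤ n → ∀ x ∈ Set.Icc (0 : ℝ) Real.pi,
      ∀ s t : ℝ, 0 ≤ s → s < t → t ≤ T →
      (∫ r in s..t, ∫ z in (0 : ℝ)..Real.pi, |DGn n (t - r) x z|)
        ≤ C * |t - s| ^ ((3 / 8) * α) := by
  obtain ⟨hα0, hα1⟩ := hα
  have hπ := Real.pi_pos
  set e : ℝ := 3/8*α with hedef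
  have he0 : 0 < e := by rw [hedef]; linarith
  have he1 : e < 1 := by rw [hedef]; linarith
  set γ : ℝ := 2 - 3/4*α with hγdef
  have hγ1 : 1 ≤ γ := by rw [hγdef]; linarith
  have hγ2 : γ ≤ 2 := by rw [hγdef]; linarith
  have h4q : 4*(1-γ) < -1 := by rw [hγdef]; linarith
  have hsum : Summable (fun j : ℕ => (j:ℝ)^(4*(1-γ))) := Real.summable_nat_rpow.mpr h4q
  set K : ℝ := ∑' j : ℕ, (j:ℝ)^(4*(1-γ)) with hKdef
  have hK0 : 0 ≤ K := tsum_nonneg fun j => Real.rpow_nonneg (Nat.cast_nonneg j) _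
  set B : ℝ := 2 * ((4/π^2)^2)^(1-γ) * K with hBdef
  have hB0 : 0 ≤ B := by positivity
  set C₁ : ℝ := Real.sqrt B with hC₁def
  have hC₁0 : 0 ≤ C₁ := Real.sqrt_nonneg _
  refine ⟨C₁/e + 1, by positivity, ?_⟩
  intro n hn x _hx s t hs hst htT
  have hn0 : (0:ℝ) < n := by exact_mod_cast Nat.pos_of_ne_zero (by omega)
  set g : ℝ → ℝ := fun r => ∑ k ∈ Finset.range n, (π/n) * |∑ j ∈ Finset.Icc 1 (n-1),
      (lam n j * Real.exp (-(lam n j)^2 * (t-r)) * phiI n j x) * phi j ((k:ℝ)*(π/n))|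
    with hgdef
  have hgeq : Set.EqOn (fun r => ∫ z in (0:ℝ)..π, |DGn n (t-r) x z|) g (Set.uIcc s t) :=
    fun r _ => aux_stepA n hn x (t-r)
  rw [intervalIntegral.integral_congr hgeq]
  -- pointwise bound
  have hbound : ∀ r : ℝ, r ≤ t → r ≠ t → g r ≤ C₁ * (t-r)^(e-1) := by
    intro r hrt hne
    have hρ : 0 < t - r := sub_pos.mpr (lt_of_le_of_ne hrt hne)
    set a : ℕ → ℝ := fun j => lam n j * Real.exp (-(lam n j)^2 * (t-r)) * phiI n j x
      with hadef
    have hg0 : 0 ≤ g r := by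
      rw [hgdef]
      exact Finset.sum_nonneg fun k _ => by positivity
    have hsq : (g r)^2 ≤ B * (t-r)^(-γ) := by
      have h1 : g r = (π/n) * ∑ k ∈ Finset.range n,
          |∑ j ∈ Finset.Icc 1 (n-1), a j * phi j ((k:ℝ)*(π/n))| := by
        rw [hgdef, Finset.mul_sum]
      have h2 : (∑ k ∈ Finset.range n,
            |∑ j ∈ Finset.Icc 1 (n-1), a j * phi j ((k:ℝ)*(π/n))|)^2
          ≤ (n:ℝ) * ∑ k ∈ Finset.range n,
            (∑ j ∈ Finset.Icc 1 (n-1), a j * phi j ((k:ℝ)*(π/n)))^2 := by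
        have := sq_sum_le_card_mul_sum_sq
          (s := Finset.range n)
          (f := fun k => |∑ j ∈ Finset.Icc 1 (n-1), a j * phi j ((k:ℝ)*(π/n))|)
        simpa [Finset.card_range, sq_abs] using this
      have h3 := aux_parseval n hn a
      have h4 : ∑ j ∈ Finset.Icc 1 (n-1), (a j)^2
          ≤ (2/π) * ((4/π^2)^2)^(1-γ) * (t-r)^(-γ) * K := by
        calc ∑ j ∈ Finset.Icc 1 (n-1), (a j)^2
            ≤ ∑ j ∈ Finset.Icc 1 (n-1),
                (2/π) * (((4/π^2)^2)^(1-γ) * (j:ℝ)^(4*(1-γ))) * (t-r)^(-γ) := by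
              refine Finset.sum_le_sum fun j hj => ?_
              exact aux_term_bound n j hn (Finset.mem_Icc.mp hj).1 (Finset.mem_Icc.mp hj).2
                x (t-r) γ hρ hγ1 hγ2
          _ = ((2/π) * ((4/π^2)^2)^(1-γ) * (t-r)^(-γ))
                * ∑ j ∈ Finset.Icc 1 (n-1), (j:ℝ)^(4*(1-γ)) := by
              rw [Finset.mul_sum]
              exact Finset.sum_congr rfl fun j _ => by ring
          _ ≤ ((2/π) * ((4/π^2)^2)^(1-γ) * (t-r)^(-γ)) * K := by
              apply mul_le_mul_of_nonneg_left _ (by positivity)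
              exact Summable.sum_le_tsum _ (fun j _ => Real.rpow_nonneg (Nat.cast_nonneg j) _)
                hsum
          _ = (2/π) * ((4/π^2)^2)^(1-γ) * (t-r)^(-γ) * K := rfl
      calc (g r)^2 = (π/n)^2 * (∑ k ∈ Finset.range n,
            |∑ j ∈ Finset.Icc 1 (n-1), a j * phi j ((k:ℝ)*(π/n))|)^2 := by
            rw [h1, mul_pow]
        _ ≤ (π/n)^2 * ((n:ℝ) * ∑ k ∈ Finset.range n,
              (∑ j ∈ Finset.Icc 1 (n-1), a j * phi j ((k:ℝ)*(π/n)))^2) :=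
            mul_le_mul_of_nonneg_left h2 (by positivity)
        _ = (π/n)^2 * ((n:ℝ) * (((n:ℝ)/π) * ∑ j ∈ Finset.Icc 1 (n-1), (a j)^2)) := by
            rw [h3]
        _ = π * ∑ j ∈ Finset.Icc 1 (n-1), (a j)^2 := by
            field_simp
        _ ≤ π * ((2/π) * ((4/π^2)^2)^(1-γ) * (t-r)^(-γ) * K) :=
            mul_le_mul_of_nonneg_left h4 hπ.le
        _ = B * (t-r)^(-γ) := by
            rw [hBdef]
            field_simp
    have hstep : g r ≤ Real.sqrt (B * (t-r)^(-γ)) := by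
      rw [← Real.sqrt_sq hg0]
      exact Real.sqrt_le_sqrt hsq
    refine hstep.trans (le_of_eq ?_)
    rw [Real.sqrt_mul hB0, hC₁def]
    congr 1
    rw [Real.sqrt_eq_rpow, ← Real.rpow_mul hρ.le]
    congr 1
    rw [hγdef, hedef]
    ring
  -- integrability
  have hcont : Continuous g := by
    rw [hgdef]
    apply continuous_finset_sum
    intro k _
    apply Continuous.mul continuous_const
    apply Continuous.abs
    apply continuous_finset_sum
    intro j _
    apply Continuous.mul _ continuous_const
    apply Continuous.mul _ continuous_const
    apply Continuous.mul continuous_const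
    exact Real.continuous_exp.comp (continuous_const.mul (continuous_const.sub continuous_id))
  have hint1 : IntervalIntegrable g volume s t := hcont.intervalIntegrable s t
  have hint2 : IntervalIntegrable (fun r => C₁ * (t-r)^(e-1)) volume s t := by
    have h0 : IntervalIntegrable (fun u : ℝ => u^(e-1)) volume (t-s) (t-t) :=
      intervalIntegral.intervalIntegrable_rpow' (by linarith)
    have h1 := (h0.comp_sub_left t).const_mul C₁
    simpa using h1
  have hneT : ∀ᵐ r : ℝ, r ≠ t := by
    rw [MeasureTheory.ae_iff]
    simp only [not_not, Set.setOf_eq_eq_singleton]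
    exact Real.volume_singleton
  have hae : g ≤ᵐ[volume.restrict (Set.Icc s t)] fun r => C₁ * (t-r)^(e-1) := by
    filter_upwards [MeasureTheory.ae_restrict_mem measurableSet_Icc,
      MeasureTheory.ae_restrict_of_ae hneT] with r hr hne
    exact hbound r hr.2 hne
  have hmono := intervalIntegral.integral_mono_ae_restrict hst.le hint1 hint2 hae
  refine hmono.trans ?_
  -- compute the RHS integral
  have hcomp : (∫ r in s..t, C₁ * (t-r)^(e-1)) = C₁ * ∫ u in (0:ℝ)..(t-s), u^(e-1) := by
    rw [intervalIntegral.integral_const_mul]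
    congr 1
    have := intervalIntegral.integral_comp_sub_left (a := s) (b := t)
      (fun u : ℝ => u^(e-1)) t
    rw [this, sub_self]
  rw [hcomp, integral_rpow (Or.inl (by linarith))]
  rw [show e - 1 + 1 = e by ring, Real.zero_rpow he0.ne']
  have habs : |t - s| = t - s := abs_of_pos (sub_pos.mpr hst)
  rw [habs]
  have hts0 : (0:ℝ) ≤ (t-s)^e := Real.rpow_nonneg (by linarith) _
  calc C₁ * (((t-s)^e - 0)/e) = C₁/e * (t-s)^e := by ring
    _ ≤ (C₁/e + 1) * (t-s)^e := by nlinarith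
end
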